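/- arXiv:1606.08293 — 2 statements merged into one kernel-verified Lean document; each statement's English description precedes it below -/
import Mathlib

section
/- For all natural numbers n ≥ 9, ln( (n·ln n)/ln(n·ln n) − 2 ) > ln( (ln(n·ln n))^2 − 2·ln((n+1)·ln(n+1)) − 2 ). -/
set_option maxHeartbeats 1000000

open Real

-- degree-6 Taylor lower bound
lemma taylor6 (t : ℝ) (ht : 0 ≤ t) :
    1 + t + t^2/2 + t^3/6 + t^4/24 + t^5/120 + t^6/720 ≤ Real.exp t := by
  have h := Real.sum_le_exp_of_nonneg ht 7
  simp [Finset.sum_range_succ, Nat.factorial] at h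
  linarith

lemma cube_lt_exp (t : ℝ) (ht : 0 ≤ t) : t^3 - 2*t^2 < Real.exp t := by
  have h := taylor6 t ht
  nlinarith [sq_nonneg (t^2 - 8*t), sq_nonneg (t^2 - 7*t), sq_nonneg (t^3 - 20*t), sq_nonneg t, sq_nonneg (t-4), mul_nonneg (mul_nonneg ht ht) ht, sq_nonneg (t^2 - 9*t)]

lemma neg_cube (t : ℝ) (ht : 14/5 ≤ t) : -t^3 + 2*t^2 + 6*t < Real.exp t := by
  have h0 : (0:ℝ) ≤ t := by linarith
  have h := Real.sum_le_exp_of_nonneg h0 4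
  simp [Finset.sum_range_succ, Nat.factorial] at h
  nlinarith [sq_nonneg (t - 14/5), mul_nonneg (sub_nonneg.2 ht) (sub_nonneg.2 ht)]

lemma exp_one_sq_le_nine : Real.exp 2 ≤ 9 := by
  have h := Real.exp_one_lt_d9
  have : Real.exp 2 = Real.exp 1 ^ 2 := by
    rw [← Real.exp_nat_mul]; norm_num
  rw [this]; nlinarith [Real.exp_pos 1]

theorem stmt_8 : ∀ n : ℕ, n ≥ 9 →
    Real.log ((n * Real.log n) / Real.log (n * Real.log n) - 2) >
      Real.log ((Real.log (n * Real.log n)) ^ 2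
        - 2 * Real.log ((n + 1) * Real.log (n + 1)) - 2) := by
  intro n hn
  have hn9 : (9:ℝ) ≤ n := by exact_mod_cast hn
  have hn0 : (0:ℝ) < n := by linarith
  have hlogn : 2 ≤ Real.log n := by
    rw [Real.le_log_iff_exp_le hn0]
    linarith [exp_one_sq_le_nine]
  set x : ℝ := n * Real.log n with hxdef
  have hx18 : 18 ≤ x := by nlinarith
  have hx0 : 0 < x := by linarith
  set L : ℝ := Real.log x with hLdef
  -- L ≥ 14/5 since exp(14/5) ≤ 18 ≤ x
  have hexp145 : Real.exp (14/5) ≤ 18 := by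
    have h5 : Real.exp (14/5) ^ (5:ℕ) = Real.exp 14 := by
      rw [← Real.exp_nat_mul]; norm_num
    have h14 : Real.exp 14 = Real.exp 1 ^ (14:ℕ) := by
      rw [← Real.exp_nat_mul]; norm_num
    have he : Real.exp 1 ^ (14:ℕ) ≤ (2.7182818286:ℝ) ^ (14:ℕ) := by
      exact pow_le_pow_left₀ (Real.exp_pos 1).le Real.exp_one_lt_d9.le 14
    have hb : (2.7182818286:ℝ) ^ (14:ℕ) ≤ 18 ^ (5:ℕ) := by norm_num
    have : Real.exp (14/5) ^ (5:ℕ) ≤ 18 ^ (5:ℕ) := by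
      rw [h5, h14]; linarith
    exact le_of_pow_le_pow_left₀ (by norm_num) (by norm_num) this
  have hL : 14/5 ≤ L := by
    rw [hLdef, Real.le_log_iff_exp_le hx0]
    linarith
  have hL0 : 0 < L := by linarith
  -- key cubic bound : L^3 - 2L^2 < x
  have hcube : L^3 - 2*L^2 < x := by
    have := cube_lt_exp L (by linarith)
    rwa [hLdef, Real.exp_log hx0] at this
  -- 3L < x  (for A > 1)
  have h3L : 3 * L < x := by
    have hlog18 : Real.log x ≤ x/18 - 1 + Real.log 18 := by
      have h1 : Real.log (x/18) ≤ x/18 - 1 := Real.log_le_sub_one_of_pos (by linarith)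
      have h2 : Real.log (x/18) = Real.log x - Real.log 18 := by
        rw [Real.log_div (by linarith) (by norm_num)]
      linarith
    have h18 : Real.log 18 ≤ 3 := by
      rw [Real.log_le_iff_le_exp (by norm_num)]
      have h3e : Real.exp 3 = Real.exp 1 ^ (3:ℕ) := by rw [← Real.exp_nat_mul]; norm_num
      have : (2.7182818283:ℝ) ^ (3:ℕ) ≤ Real.exp 1 ^ (3:ℕ) :=
        pow_le_pow_left₀ (by norm_num) Real.exp_one_gt_d9.le 3
      have hnum : (18:ℝ) ≤ (2.7182818283:ℝ) ^ (3:ℕ) := by norm_num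
      linarith [h3e ▸ (hnum.trans this)]
    have : L ≤ x/18 + 2 := by rw [hLdef]; linarith
    linarith
  set M : ℝ := Real.log ((n + 1) * Real.log (n + 1)) with hMdef
  have hlogn1 : Real.log n ≤ Real.log (n+1) := Real.log_le_log (by linarith) (by linarith)
  have hML : L < M := by
    rw [hLdef, hMdef]
    apply Real.log_lt_log hx0
    have : (0:ℝ) < Real.log n := by linarith
    nlinarith
  -- M < L + 1  via (n+1) log(n+1) ≤ (20/9) x and log(20/9) < 1
  have hMU : M < L + 1 := by
    have hlogsq : Real.log (n+1) ≤ 2 * Real.log n := by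
      have : Real.log (n+1) ≤ Real.log (n^2) := by
        apply Real.log_le_log (by linarith)
        nlinarith
      rwa [Real.log_pow, Nat.cast_ofNat] at this
    have harg : (n + 1 : ℝ) * Real.log (n+1) ≤ (20/9) * x := by
      have h1 : (n+1:ℝ) ≤ (10/9) * n := by linarith
      have h2 : (0:ℝ) < Real.log (n+1) := by linarith
      rw [hxdef]; nlinarith
    have h3 : M ≤ Real.log ((20/9) * x) := by
      rw [hMdef]
      apply Real.log_le_log (by nlinarith) harg
    have h4 : Real.log ((20/9) * x) = Real.log (20/9) + L := by
      rw [Real.log_mul (by norm_num) (ne_of_gt hx0), hLdef]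
    have h5 : Real.log (20/9) < 1 := by
      have : Real.log (20/9) < Real.log (Real.exp 1) :=
        Real.log_lt_log (by norm_num) (by linarith [Real.exp_one_gt_d9])
      rwa [Real.log_exp] at this
    linarith
  -- the bound -t^3+2t^2+6t < exp t at t = L
  have hneg : -L^3 + 2*L^2 + 6*L < x := by
    have := neg_cube L hL
    rwa [hLdef, Real.exp_log hx0] at this
  set A : ℝ := x / L - 2 with hAdef
  set B : ℝ := L^2 - 2*M - 2 with hBdef
  have hA1 : 1 < A := by
    rw [hAdef, lt_sub_iff_add_lt, lt_div_iff₀ hL0]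
    linarith
  have hBA : B < A := by
    rw [hAdef, hBdef]
    have : L^3 - 2*L^2 < x := hcube
    have h' : L^2 - 2*L < x / L := by
      rw [lt_div_iff₀ hL0]; nlinarith
    have h'' : L^2 - 2*M < L^2 - 2*L := by linarith
    linarith
  have hnBA : -B < A := by
    rw [hAdef, hBdef]
    have h' : 2*L + 6 - L^2 < x / L := by
      rw [lt_div_iff₀ hL0]; nlinarith
    linarith
  -- conclude
  show Real.log B < Real.log A
  have hA0 : 0 < A := by linarith
  rcases eq_or_ne B 0 with hB | hB
  · rw [hB, Real.log_zero]
    exact Real.log_pos hA1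
  · have habs : |B| < A := abs_lt.mpr ⟨by linarith, hBA⟩
    calc Real.log B = Real.log |B| := (Real.log_abs B).symm
      _ < Real.log A := Real.log_lt_log (abs_pos.mpr hB) habs
end

section
/- For all natural numbers n ≥ 16, ln( (1.2)^n / ln((1.2)^n) − 2 ) > ln( (ln((1.2)^n))^2 − 2·ln((1.2)^{n+1}) − 2 ). -/
-- bounds on log 1.2
lemma logU : Real.log 1.2 < 0.19 := by
  rw [Real.log_lt_iff_lt_exp (by norm_num)]
  have h := Real.add_one_le_exp (0.19/3 : ℝ)
  have h3 : Real.exp 0.19 = Real.exp (0.19/3) ^ (3:ℕ) := by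
    rw [← Real.exp_nat_mul]; norm_num
  have hp : (1 + 0.19/3 : ℝ)^(3:ℕ) ≤ Real.exp (0.19/3) ^ (3:ℕ) := by
    apply pow_le_pow_left₀ (by norm_num) (by linarith)
  calc (1.2:ℝ) < (1 + 0.19/3)^(3:ℕ) := by norm_num
    _ ≤ Real.exp (0.19/3) ^ (3:ℕ) := hp
    _ = Real.exp 0.19 := h3.symm

lemma logL : (0.18:ℝ) < Real.log 1.2 := by
  rw [Real.lt_log_iff_exp_lt (by norm_num)]
  have h := Real.add_one_le_exp (-0.02 : ℝ)
  have h2 : Real.exp 0.02 ≤ 1/0.98 := by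
    rw [show (0.02:ℝ) = -(-0.02) by norm_num, Real.exp_neg]
    rw [inv_le_comm₀ (Real.exp_pos _) (by norm_num)] -- maybe wrong name
    linarith
  have h9 : Real.exp 0.18 = Real.exp 0.02 ^ (9:ℕ) := by
    rw [← Real.exp_nat_mul]; norm_num
  have hp : Real.exp 0.02 ^ (9:ℕ) ≤ (1/0.98:ℝ)^(9:ℕ) :=
    pow_le_pow_left₀ (Real.exp_pos _).le h2 9
  calc Real.exp 0.18 = Real.exp 0.02 ^ (9:ℕ) := h9
    _ ≤ (1/0.98:ℝ)^(9:ℕ) := hp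
    _ < 1.2 := by norm_num

lemma geom : ∀ n : ℕ, 27 ≤ n → (0.006859:ℝ) * (n:ℝ)^3 ≤ (1.2:ℝ)^n := by
  intro n hn
  induction n, hn using Nat.le_induction with
  | base => norm_num
  | succ n hn ih =>
    have hs : (27:ℝ) ≤ (n:ℝ) := by exact_mod_cast hn
    have step : (0.006859:ℝ) * ((n:ℝ)+1)^3 ≤ 1.2 * (0.006859 * (n:ℝ)^3) := by
      nlinarith [hs, sq_nonneg ((n:ℝ) - 27)]
    calc (0.006859:ℝ) * ((n+1:ℕ):ℝ)^3 = 0.006859 * ((n:ℝ)+1)^3 := by push_cast; ring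
      _ ≤ 1.2 * (0.006859 * (n:ℝ)^3) := step
      _ ≤ 1.2 * (1.2:ℝ)^n := by linarith
      _ = (1.2:ℝ)^(n+1) := by ring

lemma key : ∀ n : ℕ, 16 ≤ n →
    (n:ℝ)^3 * Real.log 1.2 ^ 3 - 2 * n * (n+1) * Real.log 1.2 ^ 2 < (1.2:ℝ)^n := by
  intro n hn
  have h1 := logL
  have h2 := logU
  set L := Real.log 1.2 with hL
  have hL0 : (0:ℝ) < L := by linarith
  have hcube : L^3 < 0.19 * L^2 := by
    have := mul_lt_mul_of_pos_left h2 (pow_pos hL0 2)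
    nlinarith [this]
  have hsq : L^2 < 0.0361 := by nlinarith
  rcases lt_or_ge n 27 with h27 | h27
  · interval_cases n <;> (norm_num; linarith [hcube, hsq])
  · have hg := geom n h27
    have hn3 : (0:ℝ) < (n:ℝ)^3 := by positivity
    have hLc : L^3 < 0.006859 := by nlinarith
    have hpos : 0 < 2 * (n:ℝ) * ((n:ℝ)+1) * L^2 := by positivity
    nlinarith [mul_lt_mul_of_pos_left hLc hn3]

theorem stmt_9 : ∀ n : ℕ, n ≥ 16 →
    Real.log ((1.2 : ℝ) ^ n / Real.log ((1.2 : ℝ) ^ n) - 2) >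
      Real.log ((Real.log ((1.2 : ℝ) ^ n)) ^ 2
        - 2 * Real.log ((1.2 : ℝ) ^ (n + 1)) - 2) := by
  intro n hn
  have h1 := logL
  have h2 := logU
  set L := Real.log 1.2 with hL
  have hs : (16:ℝ) ≤ (n:ℝ) := by exact_mod_cast hn
  have hln : Real.log ((1.2:ℝ)^n) = (n:ℝ) * L := by
    rw [Real.log_pow]
  have hln1 : Real.log ((1.2:ℝ)^(n+1)) = ((n:ℝ)+1) * L := by
    rw [Real.log_pow]; push_cast; ring
  rw [hln, hln1]
  have ht : (2.88:ℝ) ≤ (n:ℝ) * L := by nlinarith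
  have ht0 : (0:ℝ) < (n:ℝ) * L := by linarith
  -- positivity of y
  have hy0 : (0:ℝ) < ((n:ℝ)*L)^2 - 2*(((n:ℝ)+1)*L) - 2 := by
    nlinarith [sq_nonneg ((n:ℝ)*L - 2.88)]
  -- x > y
  have hk := key n hn
  rw [← hL] at hk
  have hxy : ((n:ℝ)*L)^2 - 2*(((n:ℝ)+1)*L) - 2 < (1.2:ℝ)^n / ((n:ℝ)*L) - 2 := by
    rw [sub_lt_sub_iff_right, lt_div_iff₀ ht0]
    nlinarith [hk]
  exact Real.log_lt_log hy0 hxy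
end
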